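/- Let n ≥ 1 be an integer, θ ∈ (0,1), c ≥ 1 an integer, F a finite family of nonempty subsets of {1,…,n}, and π : F → ℝ with π(S) > 0 for all S ∈ F. Suppose that for every v ∈ {1,…,n} the singleton {v} belongs to F. Then the minimizer of cost_θ over the standard simplex is unique: if p and q are schedules with cost_θ(p) = cost_θ(q) = min over all schedules of cost_θ, then p = q. -/
import Mathlib

-- inverse convexity lemmas
lemma aux_inv_le (A B : ℝ) (hA : 0 < A) (hB : 0 < B) :
    1/((A+B)/2) ≤ (1/A + 1/B)/2 := by
  rw [div_le_div_iff₀ (by linarith) (by norm_num), div_add_div _ _ (ne_of_gt hA) (ne_of_gt hB)]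
  rw [div_mul_eq_mul_div, le_div_iff₀ (by positivity)]
  nlinarith [sq_nonneg (A - B)]

lemma aux_inv_lt (A B : ℝ) (hA : 0 < A) (hB : 0 < B) (hne : A ≠ B) :
    1/((A+B)/2) < (1/A + 1/B)/2 := by
  rw [div_lt_div_iff₀ (by linarith) (by norm_num), div_add_div _ _ (ne_of_gt hA) (ne_of_gt hB)]
  rw [div_mul_eq_mul_div, lt_div_iff₀ (by positivity)]
  have h3 : A - B ≠ 0 := sub_ne_zero.2 hne
  have h2 : 0 < (A - B)^2 := by positivity
  nlinarith

-- denominator positivity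
lemma aux_den_pos (θ : ℝ) (hθ0 : 0 < θ) (hθ1 : θ < 1) (c : ℕ) (x : ℝ)
    (hx0 : 0 ≤ x) (hx1 : x ≤ 1) : 0 < 1 - θ * (1 - x) ^ c := by
  have h1 : (1 - x) ^ c ≤ 1 := pow_le_one₀ (by linarith) (by linarith)
  have h2 : 0 ≤ (1 - x) ^ c := pow_nonneg (by linarith) c
  nlinarith

lemma aux_key (θ : ℝ) (hθ0 : 0 < θ) (hθ1 : θ < 1) (c : ℕ) (a b : ℝ)
    (ha0 : 0 ≤ a) (ha1 : a ≤ 1) (hb0 : 0 ≤ b) (hb1 : b ≤ 1) :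
    1/(1 - θ*(1-(a+b)/2)^c) ≤ (1/(1-θ*(1-a)^c) + 1/(1-θ*(1-b)^c))/2 := by
  set A := 1 - θ*(1-a)^c with hAdef
  set B := 1 - θ*(1-b)^c with hBdef
  have hA : 0 < A := aux_den_pos θ hθ0 hθ1 c a ha0 ha1
  have hB : 0 < B := aux_den_pos θ hθ0 hθ1 c b hb0 hb1
  have hM : 0 < 1 - θ*(1-(a+b)/2)^c :=
    aux_den_pos θ hθ0 hθ1 c _ (by linarith) (by linarith)
  have hconv : (1-(a+b)/2)^c ≤ ((1-a)^c + (1-b)^c)/2 := by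
    have := (convexOn_pow c).2 (Set.mem_Ici.2 (by linarith : (0:ℝ) ≤ 1 - a))
      (Set.mem_Ici.2 (by linarith : (0:ℝ) ≤ 1 - b)) (by norm_num : (0:ℝ) ≤ 1/2)
      (by norm_num : (0:ℝ) ≤ 1/2) (by norm_num)
    simp only [smul_eq_mul] at this
    calc (1-(a+b)/2)^c = (1/2*(1-a) + 1/2*(1-b))^c := by ring_nf
      _ ≤ 1/2*(1-a)^c + 1/2*(1-b)^c := this
      _ = ((1-a)^c + (1-b)^c)/2 := by ring
  have h1 : (A+B)/2 ≤ 1 - θ*(1-(a+b)/2)^c := by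
    rw [hAdef, hBdef]; nlinarith
  calc 1/(1 - θ*(1-(a+b)/2)^c) ≤ 1/((A+B)/2) :=
        one_div_le_one_div_of_le (by linarith) h1
    _ ≤ (1/A + 1/B)/2 := aux_inv_le A B hA hB

lemma aux_key_strict (θ : ℝ) (hθ0 : 0 < θ) (hθ1 : θ < 1) (c : ℕ) (hc : c ≠ 0) (a b : ℝ)
    (ha0 : 0 ≤ a) (ha1 : a ≤ 1) (hb0 : 0 ≤ b) (hb1 : b ≤ 1) (hne : a ≠ b) :
    1/(1 - θ*(1-(a+b)/2)^c) < (1/(1-θ*(1-a)^c) + 1/(1-θ*(1-b)^c))/2 := by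
  set A := 1 - θ*(1-a)^c with hAdef
  set B := 1 - θ*(1-b)^c with hBdef
  have hA : 0 < A := aux_den_pos θ hθ0 hθ1 c a ha0 ha1
  have hB : 0 < B := aux_den_pos θ hθ0 hθ1 c b hb0 hb1
  have hM : 0 < 1 - θ*(1-(a+b)/2)^c :=
    aux_den_pos θ hθ0 hθ1 c _ (by linarith) (by linarith)
  have hconv : (1-(a+b)/2)^c ≤ ((1-a)^c + (1-b)^c)/2 := by
    have := (convexOn_pow c).2 (Set.mem_Ici.2 (by linarith : (0:ℝ) ≤ 1 - a))
      (Set.mem_Ici.2 (by linarith : (0:ℝ) ≤ 1 - b)) (by norm_num : (0:ℝ) ≤ 1/2)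
      (by norm_num : (0:ℝ) ≤ 1/2) (by norm_num)
    simp only [smul_eq_mul] at this
    calc (1-(a+b)/2)^c = (1/2*(1-a) + 1/2*(1-b))^c := by ring_nf
      _ ≤ 1/2*(1-a)^c + 1/2*(1-b)^c := this
      _ = ((1-a)^c + (1-b)^c)/2 := by ring
  have h1 : (A+B)/2 ≤ 1 - θ*(1-(a+b)/2)^c := by
    rw [hAdef, hBdef]; nlinarith
  have hABne : A ≠ B := by
    rcases lt_or_gt_of_ne hne with h | h
    · have : (1-b)^c < (1-a)^c := pow_lt_pow_left₀ (by linarith) (by linarith) hc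
      rw [hAdef, hBdef]; intro heq; nlinarith
    · have : (1-a)^c < (1-b)^c := pow_lt_pow_left₀ (by linarith) (by linarith) hc
      rw [hAdef, hBdef]; intro heq; nlinarith
  calc 1/(1 - θ*(1-(a+b)/2)^c) ≤ 1/((A+B)/2) :=
        one_div_le_one_div_of_le (by linarith) h1
    _ < (1/A + 1/B)/2 := aux_inv_lt A B hA hB hABne


/-- If every singleton `{v}` belongs to the family `F`, then the
minimizer of `cost_θ` over the standard simplex is unique: any two schedules that
both attain the minimum cost over all schedules are equal. -/
theorem stmt6 (n : ℕ) (hn : 1 ≤ n) (θ : ℝ) (hθ : θ ∈ Set.Ioo (0 : ℝ) 1)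
    (c : ℕ) (hc : 1 ≤ c) (F : Finset (Finset (Fin n)))
    (hF : ∀ S ∈ F, S.Nonempty)
    (π : Finset (Fin n) → ℝ) (hπ : ∀ S ∈ F, 0 < π S)
    (hsingle : ∀ v : Fin n, {v} ∈ F)
    (cost : (Fin n → ℝ) → ℝ)
    (hcost : ∀ p, cost p = ∑ S ∈ F, π S / (1 - θ * (1 - ∑ i ∈ S, p i) ^ c))
    (p q : Fin n → ℝ) (hp : p ∈ stdSimplex ℝ (Fin n)) (hq : q ∈ stdSimplex ℝ (Fin n))
    (hpmin : ∀ r ∈ stdSimplex ℝ (Fin n), cost p ≤ cost r)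
    (hqmin : ∀ r ∈ stdSimplex ℝ (Fin n), cost q ≤ cost r) :
    p = q := by
  obtain ⟨hθ0, hθ1⟩ := hθ
  obtain ⟨hp0, hp1⟩ := hp
  obtain ⟨hq0, hq1⟩ := hq
  have hpS : ∀ S : Finset (Fin n), 0 ≤ ∑ i ∈ S, p i ∧ ∑ i ∈ S, p i ≤ 1 := by
    intro S
    refine ⟨Finset.sum_nonneg fun i _ => hp0 i, ?_⟩
    rw [← hp1]
    exact Finset.sum_le_sum_of_subset_of_nonneg (Finset.subset_univ S) (fun i _ _ => hp0 i)
  have hqS : ∀ S : Finset (Fin n), 0 ≤ ∑ i ∈ S, q i ∧ ∑ i ∈ S, q i ≤ 1 := by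
    intro S
    refine ⟨Finset.sum_nonneg fun i _ => hq0 i, ?_⟩
    rw [← hq1]
    exact Finset.sum_le_sum_of_subset_of_nonneg (Finset.subset_univ S) (fun i _ _ => hq0 i)
  set m : Fin n → ℝ := fun i => (p i + q i) / 2 with hmdef
  have hm_mem : m ∈ stdSimplex ℝ (Fin n) := by
    constructor
    · intro i; have := hp0 i; have := hq0 i
      simp only [hmdef]; linarith
    · simp only [hmdef]
      rw [← Finset.sum_div, Finset.sum_add_distrib, hp1, hq1]; norm_num
  have hmS : ∀ S : Finset (Fin n), ∑ i ∈ S, m i = (∑ i ∈ S, p i + ∑ i ∈ S, q i) / 2 := by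
    intro S
    simp only [hmdef]
    rw [← Finset.sum_div, Finset.sum_add_distrib]
  set f : Finset (Fin n) → ℝ := fun S =>
    (π S / (1 - θ * (1 - ∑ i ∈ S, p i) ^ c) + π S / (1 - θ * (1 - ∑ i ∈ S, q i) ^ c)) / 2
      - π S / (1 - θ * (1 - ∑ i ∈ S, m i) ^ c) with hfdef
  have hf_nonneg : ∀ S ∈ F, 0 ≤ f S := by
    intro S hS
    have key := aux_key θ hθ0 hθ1 c (∑ i ∈ S, p i) (∑ i ∈ S, q i)
      (hpS S).1 (hpS S).2 (hqS S).1 (hqS S).2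
    have hπS := hπ S hS
    have this1 := mul_le_mul_of_nonneg_left key (le_of_lt hπS)
    simp only [hfdef, hmS S]
    have h' : π S / (1 - θ * (1 - (∑ i ∈ S, p i + ∑ i ∈ S, q i) / 2) ^ c) ≤
        (π S / (1 - θ * (1 - ∑ i ∈ S, p i) ^ c) + π S / (1 - θ * (1 - ∑ i ∈ S, q i) ^ c)) / 2 := by
      calc π S / (1 - θ * (1 - (∑ i ∈ S, p i + ∑ i ∈ S, q i) / 2) ^ c)
          = π S * (1 / (1 - θ * (1 - (∑ i ∈ S, p i + ∑ i ∈ S, q i) / 2) ^ c)) := by ring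
        _ ≤ π S * ((1 / (1 - θ * (1 - ∑ i ∈ S, p i) ^ c) + 1 / (1 - θ * (1 - ∑ i ∈ S, q i) ^ c)) / 2) := this1
        _ = (π S / (1 - θ * (1 - ∑ i ∈ S, p i) ^ c) + π S / (1 - θ * (1 - ∑ i ∈ S, q i) ^ c)) / 2 := by ring
    linarith
  have hcp : cost p = cost q := le_antisymm (hpmin q ⟨hq0, hq1⟩) (hqmin p ⟨hp0, hp1⟩)
  have h1 : cost p ≤ cost m := hpmin m hm_mem
  have hsum : ∑ S ∈ F, f S = 0 := by
    have h2 : ∑ S ∈ F, f S = (cost p + cost q) / 2 - cost m := by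
      rw [hcost p, hcost q, hcost m, hfdef]
      rw [Finset.sum_sub_distrib, ← Finset.sum_div, ← Finset.sum_add_distrib]
    have h4 : 0 ≤ ∑ S ∈ F, f S := Finset.sum_nonneg hf_nonneg
    rw [h2] at h4 ⊢
    linarith
  have hzero : ∀ S ∈ F, f S = 0 :=
    (Finset.sum_eq_zero_iff_of_nonneg hf_nonneg).1 hsum
  funext v
  by_contra hne
  have hS := hsingle v
  have h0 := hzero {v} hS
  have key := aux_key_strict θ hθ0 hθ1 c (by omega) (∑ i ∈ {v}, p i) (∑ i ∈ {v}, q i)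
    (hpS {v}).1 (hpS {v}).2 (hqS {v}).1 (hqS {v}).2 (by simpa using hne)
  have hπS := hπ {v} hS
  have this1 := mul_lt_mul_of_pos_left key hπS
  simp only [hfdef, hmS {v}] at h0
  have h' : π {v} / (1 - θ * (1 - (∑ i ∈ {v}, p i + ∑ i ∈ {v}, q i) / 2) ^ c) <
      (π {v} / (1 - θ * (1 - ∑ i ∈ {v}, p i) ^ c) + π {v} / (1 - θ * (1 - ∑ i ∈ {v}, q i) ^ c)) / 2 := by
    calc π {v} / (1 - θ * (1 - (∑ i ∈ {v}, p i + ∑ i ∈ {v}, q i) / 2) ^ c)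
        = π {v} * (1 / (1 - θ * (1 - (∑ i ∈ {v}, p i + ∑ i ∈ {v}, q i) / 2) ^ c)) := by ring
      _ < π {v} * ((1 / (1 - θ * (1 - ∑ i ∈ {v}, p i) ^ c) + 1 / (1 - θ * (1 - ∑ i ∈ {v}, q i) ^ c)) / 2) := this1
      _ = (π {v} / (1 - θ * (1 - ∑ i ∈ {v}, p i) ^ c) + π {v} / (1 - θ * (1 - ∑ i ∈ {v}, q i) ^ c)) / 2 := by ring
  linarith
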